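/- arXiv:1504.06783 — 4 statements merged into one kernel-verified Lean document; each statement's English description precedes it below -/
import Mathlib

section
/- For every integer n and every finitely generated module M over a commutative Noetherian ring R, there exists a largest R-submodule M_n of M with dim_R M_n ≤ n (where dim of the zero module is -∞). -/
open IsLocalRing

/-- The (Krull) dimension of a module: `dim_R M = dim (R / ann_R M)`;
the zero module has dimension `⊥` (i.e. `-∞`). -/
noncomputable def moduleDim (R : Type*) [CommRing R] (M : Type*) [AddCommGroup M]
    [Module R M] : WithBot ℕ∞ :=
  ringKrullDim (R ⧸ Module.annihilator R M)

/-- `dimLe d n` means `d ≤ n` where `n : ℤ` and `d` is a dimension in `WithBot ℕ∞`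
(so for `n < 0` this means `d = ⊥`, i.e. the module is zero). -/
def dimLe (d : WithBot ℕ∞) (n : ℤ) : Prop :=
  if 0 ≤ n then d ≤ ((n.toNat : ℕ∞) : WithBot ℕ∞) else d = ⊥

/-- The depth of a module over a Noetherian local ring: the supremum of lengths of
regular sequences on `M` contained in the maximal ideal. -/
noncomputable def moduleDepth (R : Type*) [CommRing R] [IsLocalRing R] (M : Type*)
    [AddCommGroup M] [Module R M] : ℕ∞ :=
  sSup {n : ℕ∞ | ∃ rs : List R, (rs.length : ℕ∞) = n ∧
    (∀ r ∈ rs, r ∈ maximalIdeal R) ∧ RingTheory.Sequence.IsRegular M rs}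

/-- A module over a Noetherian local ring is Cohen-Macaulay if it is zero or
`depth M = dim M`. -/
def IsCMModule (R : Type*) [CommRing R] [IsLocalRing R] (M : Type*) [AddCommGroup M]
    [Module R M] : Prop :=
  Nontrivial M → (moduleDepth R M : WithBot ℕ∞) = moduleDim R M

/-- A module over a (not necessarily local) commutative ring is Cohen-Macaulay if all its
localizations at primes are Cohen-Macaulay. -/
def IsCMModuleGen (R : Type*) [CommRing R] (M : Type*) [AddCommGroup M] [Module R M] : Prop :=
  ∀ (P : Ideal R) [P.IsPrime],
    IsCMModule (Localization.AtPrime P) (LocalizedModule P.primeCompl M)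

/-- `D : Fin (ℓ+1) → Submodule R M` is the dimension filtration of `M`:
`D 0 = 0`, `D ℓ = M`, the chain is strictly increasing, each `D i` (for `i ≥ 1`) is the
largest submodule of its dimension, and every nonzero submodule which is largest among
submodules of dimension at most its own dimension occurs in the chain. -/
def IsDimFiltration (R : Type*) [CommRing R] (M : Type*) [AddCommGroup M] [Module R M]
    (ℓ : ℕ) (D : Fin (ℓ + 1) → Submodule R M) : Prop :=
  D 0 = ⊥ ∧ D (Fin.last ℓ) = ⊤ ∧ StrictMono D ∧
  (∀ i : Fin ℓ, IsGreatest
    {N : Submodule R M | moduleDim R ↥N ≤ moduleDim R ↥(D i.succ)} (D i.succ)) ∧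
  (∀ N : Submodule R M, N ≠ ⊥ →
    IsGreatest {N' : Submodule R M | moduleDim R ↥N' ≤ moduleDim R ↥N} N → ∃ i, D i = N)

/-- A module over a local ring is sequentially Cohen-Macaulay if the consecutive quotients
of its dimension filtration are Cohen-Macaulay. -/
def IsSeqCM (R : Type*) [CommRing R] [IsLocalRing R] (M : Type*) [AddCommGroup M]
    [Module R M] : Prop :=
  ∃ (ℓ : ℕ) (D : Fin (ℓ + 1) → Submodule R M), IsDimFiltration R M ℓ D ∧
    ∀ i : Fin ℓ, IsCMModule R
      (↥(D i.succ) ⧸ (D i.castSucc).comap (D i.succ).subtype)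

/-- Sequentially Cohen-Macaulay over a not necessarily local ring. -/
def IsSeqCMGen (R : Type*) [CommRing R] (M : Type*) [AddCommGroup M] [Module R M] : Prop :=
  ∃ (ℓ : ℕ) (D : Fin (ℓ + 1) → Submodule R M), IsDimFiltration R M ℓ D ∧
    ∀ i : Fin ℓ, IsCMModuleGen R
      (↥(D i.succ) ⧸ (D i.castSucc).comap (D i.succ).subtype)

/-- A local ring is sequentially Cohen-Macaulay if it is so as a module over itself. -/
def IsSeqCMRing (R : Type*) [CommRing R] [IsLocalRing R] : Prop := IsSeqCM R R

section aux

variable {R : Type*} [CommRing R]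

lemma ringKrullDim_quotient_inf_le (I J : Ideal R) :
    ringKrullDim (R ⧸ (I ⊓ J)) ≤ max (ringKrullDim (R ⧸ I)) (ringKrullDim (R ⧸ J))
     := by
  refine iSup_le fun p => ?_
  -- the chain of primes in R obtained by pulling back
  set q : Fin (p.length + 1) → Ideal R :=
    fun i => (p i).asIdeal.comap (Ideal.Quotient.mk (I ⊓ J)) with hq
  have hqprime : ∀ i, (q i).IsPrime := fun i => Ideal.IsPrime.comap _
  have hqK : ∀ i, I ⊓ J ≤ q i := by
    intro i x hx
    simp only [hq, Ideal.mem_comap]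
    rw [Ideal.Quotient.eq_zero_iff_mem.mpr hx]
    exact (p i).asIdeal.zero_mem
  have hqmono : ∀ i j : Fin (p.length + 1), i < j → q i < q j := by
    intro i j hij
    have h := p.strictMono hij
    exact lt_of_le_of_ne (Ideal.comap_mono h.le)
      (fun h' => h.ne (PrimeSpectrum.ext ((Ideal.comap_injective_of_surjective _
        Ideal.Quotient.mk_surjective) h')))
  have h0 : I ≤ q 0 ∨ J ≤ q 0 := ((hqprime 0).inf_le).mp (hqK 0)
  -- a helper to produce the series in R ⧸ L for L = I or L = J
  have main : ∀ L : Ideal R, L ≤ q 0 →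
      (p.length : WithBot ℕ∞) ≤ ringKrullDim (R ⧸ L) := by
    intro L hL
    have hLq : ∀ i, L ≤ q i := by
      intro i
      rcases eq_or_lt_of_le (Fin.zero_le i) with h | h
      · exact h ▸ hL
      · exact hL.trans (hqmono 0 i h).le
    have hker : ∀ i, RingHom.ker (Ideal.Quotient.mk L) ≤ q i := by
      intro i; rw [Ideal.mk_ker]; exact hLq i
    have hprime : ∀ i, ((q i).map (Ideal.Quotient.mk L)).IsPrime := fun i =>
      Ideal.map_isPrime_of_surjective Ideal.Quotient.mk_surjective (hker i)
    let r : LTSeries (PrimeSpectrum (R ⧸ L)) :=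
      { length := p.length
        toFun := fun i => ⟨(q i).map (Ideal.Quotient.mk L), hprime i⟩
        step := by
          intro i
          have h := hqmono i.castSucc i.succ (by simp [Fin.castSucc_lt_succ_iff])
          refine lt_of_le_of_ne (Ideal.map_mono h.le) (fun h' => h.ne ?_)
          have hc : ∀ j : Fin (p.length + 1),
              ((q j).map (Ideal.Quotient.mk L)).comap (Ideal.Quotient.mk L) = q j := by
            intro j
            rw [Ideal.comap_map_of_surjective _ Ideal.Quotient.mk_surjective,
              ← RingHom.ker_eq_comap_bot, Ideal.mk_ker]
            exact sup_eq_left.mpr (hLq j)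
          have := congrArg (Ideal.comap (Ideal.Quotient.mk L))
            h'
          rwa [hc, hc] at this }
    exact Order.LTSeries.length_le_krullDim r
  rcases h0 with h | h
  · exact (main I h).trans (le_max_left _ _)
  · exact (main J h).trans (le_max_right _ _)

end aux

section aux2

variable {R : Type*} [CommRing R] {M : Type*} [AddCommGroup M] [Module R M]

lemma moduleDim_submodule_eq (N : Submodule R M) :
    moduleDim R ↥N = ringKrullDim (R ⧸ N.annihilator) := rfl

lemma moduleDim_eq_bot_iff (N : Submodule R M) :
    moduleDim R ↥N = ⊥ ↔ N = ⊥ := by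
  constructor
  · intro h
    by_contra hN
    have hann : N.annihilator ≠ ⊤ := fun h' => hN (Submodule.annihilator_eq_top_iff.mp h')
    have : Nontrivial (R ⧸ N.annihilator) := Ideal.Quotient.nontrivial_iff.mpr hann
    have h0 := ringKrullDim_nonneg_of_nontrivial (R := R ⧸ N.annihilator)
    rw [← moduleDim_submodule_eq, h] at h0
    exact absurd h0 (by simp)
  · intro h
    subst h
    rw [moduleDim_submodule_eq, Submodule.annihilator_bot]
    have : Subsingleton (R ⧸ (⊤ : Ideal R)) := by
      refine Ideal.Quotient.subsingleton_iff.mpr rfl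
    exact ringKrullDim_eq_bot_of_subsingleton

lemma moduleDim_mono {N P : Submodule R M} (h : N ≤ P) :
    moduleDim R ↥N ≤ moduleDim R ↥P := by
  rw [moduleDim_submodule_eq, moduleDim_submodule_eq]
  refine ringKrullDim_le_of_surjective
    (Ideal.Quotient.factor (Submodule.annihilator_mono h)) (fun y => ?_)
  obtain ⟨x, rfl⟩ := Ideal.Quotient.mk_surjective y
  exact ⟨Ideal.Quotient.mk _ x, Ideal.Quotient.factor_mk _ x⟩

lemma moduleDim_sup_le (N P : Submodule R M) :
    moduleDim R ↥(N ⊔ P) ≤ max (moduleDim R ↥N) (moduleDim R ↥P) := by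
  rw [moduleDim_submodule_eq, moduleDim_submodule_eq, moduleDim_submodule_eq,
    Submodule.annihilator_sup]
  exact ringKrullDim_quotient_inf_le _ _

end aux2

/-- For every integer `n` and every finitely generated module `M` over a
commutative Noetherian ring `R`, there exists a largest `R`-submodule `Mₙ` of `M` with
`dim_R Mₙ ≤ n`. -/
theorem stmt0 (R : Type*) [CommRing R] [IsNoetherianRing R]
    (M : Type*) [AddCommGroup M] [Module R M] [Module.Finite R M] (n : ℤ) :
    ∃ Mn : Submodule R M,
      IsGreatest {N : Submodule R M | dimLe (moduleDim R ↥N) n} Mn := by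
  classical
  have hnoeth : IsNoetherian R M := inferInstance
  set S := {N : Submodule R M | dimLe (moduleDim R ↥N) n} with hS
  have hbot : (⊥ : Submodule R M) ∈ S := by
    have hb := (moduleDim_eq_bot_iff (⊥ : Submodule R M)).mpr rfl
    simp only [hS, Set.mem_setOf_eq, dimLe]
    split
    · rw [hb]; exact bot_le
    · exact hb
  have hsup : ∀ N P : Submodule R M, N ∈ S → P ∈ S → N ⊔ P ∈ S := by
    intro N P hN hP
    simp only [hS, Set.mem_setOf_eq, dimLe] at hN hP ⊢
    split
    · rename_i hn
      rw [if_pos hn] at hN hP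
      exact (moduleDim_sup_le N P).trans (max_le hN hP)
    · rename_i hn
      rw [if_neg hn] at hN hP
      rw [moduleDim_eq_bot_iff, (moduleDim_eq_bot_iff N).mp hN,
        (moduleDim_eq_bot_iff P).mp hP, sup_idem]
  obtain ⟨Mn, hMn, hmax⟩ :=
    (set_has_maximal_iff_noetherian.mpr hnoeth) S ⟨⊥, hbot⟩
  refine ⟨Mn, hMn, fun N hN => ?_⟩
  have h1 : N ⊔ Mn ∈ S := hsup N Mn hN hMn
  have h2 : ¬ Mn < N ⊔ Mn := hmax _ h1
  have h3 : Mn = N ⊔ Mn := (lt_or_eq_of_le le_sup_right).resolve_left h2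
  exact le_sup_left.trans h3.ge
end

section
/- The set S(M) = {dim_R N : N a nonzero submodule of M} equals {dim R/p : p ∈ Ass_R M}, for a nonzero finitely generated module M over a Noetherian ring R. -/
open IsLocalRing

section auxlemmas

open Order

variable {R : Type*} [CommRing R]

private lemma exists_prod_notMem (p : Ideal R) (hp : p.IsPrime) (F : Finset (Ideal R))
    (h : ∀ q ∈ F, ∃ x ∈ q, x ∉ p) : ∃ s, s ∉ p ∧ ∀ q ∈ F, s ∈ q := by
  classical
  induction F using Finset.induction_on with
  | empty =>
    exact ⟨1, (Ideal.ne_top_iff_one p).mp hp.ne_top,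
      fun q hq => absurd hq (Finset.notMem_empty q)⟩
  | @insert q₀ F hq₀ ih =>
    obtain ⟨s, hs, hsF⟩ := ih (fun q hq => h q (Finset.mem_insert_of_mem hq))
    obtain ⟨x, hxq, hxp⟩ := h q₀ (Finset.mem_insert_self _ _)
    refine ⟨x * s, fun hm => ?_, fun q hq => ?_⟩
    · rcases hp.mem_or_mem hm with h' | h'
      · exact hxp h'
      · exact hs h'
    · rcases Finset.mem_insert.mp hq with rfl | hq
      · exact Ideal.mul_mem_right _ _ hxq
      · exact Ideal.mul_mem_left _ _ (hsF q hq)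

private lemma mem_associatedPrimes_of_mem_minimalPrimes
    [IsNoetherianRing R] (M : Type*) [AddCommGroup M] [Module R M] [Module.Finite R M]
    {p : Ideal R} (hp : p ∈ (Module.annihilator R M).minimalPrimes) :
    p ∈ associatedPrimes R M := by
  classical
  have hpP : p.IsPrime := hp.1.1
  have hIp : Module.annihilator R M ≤ p := hp.1.2
  set I := Module.annihilator R M with hI
  have hfin : I.minimalPrimes.Finite := by
    rw [Ideal.minimalPrimes_eq_comap]
    exact (minimalPrimes.finite_of_isNoetherianRing _).image _
  obtain ⟨s₀, hs₀p, hs₀⟩ := exists_prod_notMem p hpP (hfin.toFinset.erase p) (by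
    intro q hq
    rw [Finset.mem_erase, Set.Finite.mem_toFinset] at hq
    obtain ⟨hqp, hqmin⟩ := hq
    by_contra hcon
    push_neg at hcon
    exact hqp (le_antisymm hcon (hp.2 hqmin.1 hcon)))
  have hmul : Ideal.span {s₀} * p ≤ I.radical := by
    rw [Ideal.mul_le]
    intro r hr t ht
    rw [← Ideal.sInf_minimalPrimes, Submodule.mem_sInf]
    intro q hq
    obtain ⟨c, rfl⟩ := Ideal.mem_span_singleton'.mp hr
    by_cases hqp : q = p
    · subst hqp; exact Ideal.mul_mem_left _ _ ht
    · have hsq : s₀ ∈ q := hs₀ q (by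
        rw [Finset.mem_erase, Set.Finite.mem_toFinset]; exact ⟨hqp, hq⟩)
      exact Ideal.mul_mem_right _ _ (Ideal.mul_mem_left _ _ hsq)
  obtain ⟨n, hn⟩ := Ideal.exists_radical_pow_le_of_fg I (IsNoetherian.noetherian _)
  have hpow : Ideal.span {s₀} ^ n * p ^ n ≤ I := by
    rw [← mul_pow]
    exact le_trans (Ideal.pow_right_mono hmul n) hn
  have hex : ∃ k, ∃ s, s ∉ p ∧ ∀ t ∈ p ^ k, ∀ v : M, (s * t) • v = 0 := by
    refine ⟨n, s₀ ^ n, fun hc => hs₀p (hpP.mem_of_pow_mem _ hc), fun t ht v => ?_⟩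
    have hmem : s₀ ^ n * t ∈ I := hpow (Ideal.mul_mem_mul (by
      rw [Ideal.span_singleton_pow]; exact Ideal.mem_span_singleton_self _) ht)
    exact Module.mem_annihilator.mp hmem v
  have hk0 : Nat.find hex ≠ 0 := by
    intro h0
    obtain ⟨s, hsp, hs⟩ := Nat.find_spec hex
    apply hsp
    apply hIp
    rw [Module.mem_annihilator]
    intro v
    have := hs 1 (by rw [h0, pow_zero, Ideal.one_eq_top]; trivial) v
    rwa [mul_one] at this
  obtain ⟨k', hk'⟩ : ∃ k', Nat.find hex = k' + 1 := Nat.exists_eq_succ_of_ne_zero hk0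
  obtain ⟨s, hsp, hs⟩ := Nat.find_spec hex
  rw [hk'] at hs
  have hmin : ¬ ∃ s, s ∉ p ∧ ∀ t ∈ p ^ k', ∀ v : M, (s * t) • v = 0 :=
    Nat.find_min hex (by omega)
  set N' : Submodule R M := Submodule.torsionBySet R M (p : Set R) with hN'
  by_cases hyy : ∃ y ∈ N', (Submodule.span R {y}).annihilator = p
  · obtain ⟨y, -, hy⟩ := hyy
    exact isAssociatedPrime_iff.mpr ⟨hpP, y, by rw [Submodule.bot_colon', hy]⟩
  · exfalso
    push_neg at hyy
    obtain ⟨T, hT⟩ := IsNoetherian.noetherian N'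
    obtain ⟨a, hap, ha⟩ := exists_prod_notMem p hpP
      (T.image fun y => (Submodule.span R {y}).annihilator) (by
        intro q hq
        obtain ⟨y, hyT, rfl⟩ := Finset.mem_image.mp hq
        have hyN' : y ∈ N' := hT ▸ Submodule.subset_span hyT
        have hple : p ≤ (Submodule.span R {y}).annihilator := by
          intro t htp
          rw [Submodule.mem_annihilator_span_singleton]
          exact (Submodule.mem_torsionBySet_iff _ _).mp hyN' ⟨t, htp⟩
        obtain ⟨x, hx1, hx2⟩ := SetLike.exists_of_lt (lt_of_le_of_ne hple (Ne.symm (hyy y hyN')))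
        exact ⟨x, hx1, hx2⟩)
    have haN' : ∀ v ∈ N', a • v = 0 := by
      intro v hv
      rw [← hT] at hv
      refine Submodule.span_induction ?_ ?_ ?_ ?_ hv
      · intro y hyT
        exact (Submodule.mem_annihilator_span_singleton _ _).mp
          (ha _ (Finset.mem_image_of_mem _ hyT))
      · exact smul_zero a
      · intro x y _ _ hx hy; rw [smul_add, hx, hy, add_zero]
      · intro c x _ hx; rw [smul_comm, hx, smul_zero]
    apply hmin
    refine ⟨a * s, fun hc => ?_, fun t ht v => ?_⟩
    · rcases hpP.mem_or_mem hc with h' | h'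
      · exact hap h'
      · exact hsp h'
    · have htor : (s * t) • v ∈ N' := by
        rw [hN', Submodule.mem_torsionBySet_iff]
        rintro ⟨u, hu⟩
        have hmem : u * t ∈ p ^ (k' + 1) := by
          rw [pow_succ, mul_comm u t]
          exact Ideal.mul_mem_mul ht hu
        have : (u : R) * (s * t) = s * (u * t) := by ring
        rw [← mul_smul, this]
        exact hs (u * t) hmem v
      have : (a * s * t) • v = a • ((s * t) • v) := by rw [← mul_smul, mul_assoc]
      rw [this, haN' _ htor]

end auxlemmas




section dimsec
open Order

private lemma exists_minimalPrimes_ringKrullDim_eq {R : Type*} [CommRing R] [IsNoetherianRing R]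
    (I : Ideal R) (hI : I ≠ ⊤) :
    ∃ p ∈ I.minimalPrimes, ringKrullDim (R ⧸ p) = ringKrullDim (R ⧸ I) := by
  classical
  have hfin : I.minimalPrimes.Finite := by
    rw [Ideal.minimalPrimes_eq_comap]
    exact (minimalPrimes.finite_of_isNoetherianRing _).image _
  have hne : I.minimalPrimes.Nonempty := by
    obtain ⟨m, hm, him⟩ := Ideal.exists_le_maximal I hI
    haveI := hm.isPrime
    obtain ⟨q, hq, -⟩ := Ideal.exists_minimalPrimes_le him
    exact ⟨q, hq⟩
  obtain ⟨q, hqmem, hqmax⟩ :=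
    Set.Finite.exists_maximalFor (fun q : Ideal R => ringKrullDim (R ⧸ q)) _ hfin hne
  have hle : ∀ r ∈ I.minimalPrimes, ringKrullDim (R ⧸ r) ≤ ringKrullDim (R ⧸ q) := by
    intro r hr
    by_contra hlt
    push_neg at hlt
    exact hlt.not_ge (hqmax hr hlt.le)
  refine ⟨q, hqmem, le_antisymm ?_ ?_⟩
  · refine ringKrullDim_le_of_surjective (Ideal.Quotient.factor hqmem.1.2) ?_
    intro x
    obtain ⟨y, rfl⟩ := Ideal.Quotient.mk_surjective x
    exact ⟨Ideal.Quotient.mk I y, Ideal.Quotient.factor_mk _ _⟩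
  · rw [ringKrullDim, Order.krullDim]
    refine iSup_le fun c => ?_
    set g : PrimeSpectrum (R ⧸ I) → Ideal R :=
      fun P => P.asIdeal.comap (Ideal.Quotient.mk I) with hg
    have hIg : ∀ P : PrimeSpectrum (R ⧸ I), I ≤ g P := by
      intro P x hx
      show Ideal.Quotient.mk I x ∈ P.asIdeal
      rw [Ideal.Quotient.eq_zero_iff_mem.mpr hx]
      exact P.asIdeal.zero_mem
    haveI : ∀ P : PrimeSpectrum (R ⧸ I), (g P).IsPrime :=
      fun P => Ideal.IsPrime.comap _ (hK := P.isPrime)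
    obtain ⟨q', hq', hq'le⟩ := Ideal.exists_minimalPrimes_le (hIg c.head)
    have hq'P : ∀ i, q' ≤ g (c i) := fun i =>
      hq'le.trans (Ideal.comap_mono ((PrimeSpectrum.asIdeal_le_asIdeal _ _).mpr
        (c.strictMono.monotone (Fin.zero_le i))))
    have hcomap : ∀ i, ((g (c i)).map (Ideal.Quotient.mk q')).comap (Ideal.Quotient.mk q')
        = g (c i) := fun i => by
      rw [Ideal.comap_map_of_surjective _ Ideal.Quotient.mk_surjective,
        ← RingHom.ker_eq_comap_bot, Ideal.mk_ker, sup_eq_left.mpr (hq'P i)]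
    let f : Fin (c.length + 1) → PrimeSpectrum (R ⧸ q') := fun i =>
      ⟨(g (c i)).map (Ideal.Quotient.mk q'),
        Ideal.map_isPrime_of_surjective Ideal.Quotient.mk_surjective
          (by rw [Ideal.mk_ker]; exact hq'P i)⟩
    have hfmono : StrictMono f := by
      intro i j hij
      have h1 : g (c i) < g (c j) := by
        refine lt_of_le_of_ne (Ideal.comap_mono ((PrimeSpectrum.asIdeal_le_asIdeal _ _).mpr
          (c.strictMono hij).le)) ?_
        intro heq
        have := Ideal.comap_injective_of_surjective _ Ideal.Quotient.mk_surjective heq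
        exact (c.strictMono hij).ne (PrimeSpectrum.ext this)
      rw [show (f i < f j) ↔ (f i).asIdeal < (f j).asIdeal from Iff.rfl]
      refine lt_of_le_of_ne (Ideal.map_mono h1.le) ?_
      intro heq
      have := congrArg (Ideal.comap (Ideal.Quotient.mk q')) heq
      rw [hcomap i, hcomap j] at this
      exact h1.ne this
    have := LTSeries.length_le_krullDim (LTSeries.mk c.length f hfmono)
    exact le_trans this (hle q' hq')

end dimsec

/-- `S(M) = {dim_R N : N a nonzero submodule of M} = {dim R/p : p ∈ Ass_R M}`. -/
theorem stmt2 (R : Type*) [CommRing R] [IsNoetherianRing R]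
    (M : Type*) [AddCommGroup M] [Module R M] [Module.Finite R M] [Nontrivial M] :
    {d : WithBot ℕ∞ | ∃ N : Submodule R M, N ≠ ⊥ ∧ moduleDim R ↥N = d} =
      {d : WithBot ℕ∞ | ∃ p ∈ associatedPrimes R M, ringKrullDim (R ⧸ p) = d} := by
  ext d
  simp only [Set.mem_setOf_eq]
  constructor
  · rintro ⟨N, hN, rfl⟩
    have hI : Module.annihilator R ↥N ≠ ⊤ := by
      intro h
      exact hN (Submodule.annihilator_eq_top_iff.mp h)
    obtain ⟨q, hq, hdim⟩ := exists_minimalPrimes_ringKrullDim_eq _ hI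
    haveI : Module.Finite R ↥N := Module.Finite.iff_fg.mpr (IsNoetherian.noetherian N)
    refine ⟨q, ?_, hdim⟩
    exact associatedPrimes.subset_of_injective (f := N.subtype) (Submodule.injective_subtype N)
      (mem_associatedPrimes_of_mem_minimalPrimes ↥N hq)
  · rintro ⟨p, hp, rfl⟩
    obtain ⟨hpP, x, hx⟩ := isAssociatedPrime_iff.mp hp
    rw [Submodule.bot_colon'] at hx
    refine ⟨Submodule.span R {x}, ?_, ?_⟩
    · intro hbot
      exact hpP.ne_top (by rw [hx, hbot, Submodule.annihilator_bot])
    · have hann : Module.annihilator R ↥(Submodule.span R {x}) = p := hx.symm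
      rw [moduleDim, hann]
end

section
/- Let M be a nonzero finitely generated module over a Noetherian ring R, with a primary decomposition 0 = ∩_{p ∈ Ass_R M} M(p), where M(p) is p-primary in M. Then for each i, the term D_i of the dimension filtration with i < ℓ satisfies D_i = ∩_{p ∈ Ass_R M, dim R/p > d_i} M(p). -/
open IsLocalRing

/-- `Q` is a `p`-primary submodule of `M`, i.e. `Ass_R (M/Q) = {p}`. -/
def IsPrimarySubmodule {R : Type*} [CommRing R] {M : Type*} [AddCommGroup M] [Module R M]
    (Q : Submodule R M) (p : Ideal R) : Prop :=
  associatedPrimes R (M ⧸ Q) = {p}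

section AuxLemmas

variable {R : Type*} [CommRing R] {M : Type*} [AddCommGroup M] [Module R M]

theorem aux_colon_eq (x : M) : (⊥ : Submodule R M).colon {x} = (R ∙ x).annihilator := by
  ext r
  rw [Submodule.mem_colon_singleton, Submodule.mem_bot, Submodule.mem_annihilator_span_singleton]

theorem aux_ass_iff [IsNoetherianRing R] {p : Ideal R} :
    p ∈ associatedPrimes R M ↔ p.IsPrime ∧ ∃ x : M, p = (R ∙ x).annihilator := by
  rw [AssociatedPrimes.mem_iff, isAssociatedPrime_iff]
  simp only [aux_colon_eq]

/-- Associated primes of `M` are among those of a submodule `N` and of `M ⧸ N`. -/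
theorem aux_ass_subset_union [IsNoetherianRing R] (N : Submodule R M) :
    associatedPrimes R M ⊆ associatedPrimes R N ∪ associatedPrimes R (M ⧸ N) := by
  rintro p hp0
  obtain ⟨hp, x, hx⟩ := aux_ass_iff.mp hp0
  have hmem : ∀ r : R, r ∈ p ↔ r • x = 0 := fun r => by
    rw [hx, Submodule.mem_annihilator_span_singleton]
  by_cases h : ∀ r : R, r • x ∈ N → r • x = 0
  · right
    refine aux_ass_iff.mpr ⟨hp, N.mkQ x, ?_⟩
    ext r
    rw [Submodule.mem_annihilator_span_singleton, Submodule.mkQ_apply,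
      ← Submodule.Quotient.mk_smul, Submodule.Quotient.mk_eq_zero]
    exact ⟨fun hr => (hmem r).mp hr ▸ N.zero_mem, fun hrN => (hmem r).mpr (h r hrN)⟩
  · left
    push_neg at h
    obtain ⟨r, hrN, hr0⟩ := h
    have hrp : r ∉ p := fun hrp => hr0 ((hmem r).mp hrp)
    refine aux_ass_iff.mpr ⟨hp, ⟨r • x, hrN⟩, ?_⟩
    ext s
    rw [Submodule.mem_annihilator_span_singleton]
    have hcoe : (s • (⟨r • x, hrN⟩ : N) = 0) ↔ s • (r • x) = (0 : M) := by
      rw [Subtype.ext_iff]; rfl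
    rw [hcoe, smul_smul]
    constructor
    · exact fun hs => (hmem (s * r)).mp (Ideal.mul_mem_right r p hs)
    · intro hsr
      exact (hp.mem_or_mem ((hmem (s * r)).mpr hsr)).resolve_right hrp

/-- Associated primes of a product are among those of the factors. -/
theorem aux_ass_prod [IsNoetherianRing R] {M₂ : Type*} [AddCommGroup M₂] [Module R M₂] :
    associatedPrimes R (M × M₂) ⊆ associatedPrimes R M ∪ associatedPrimes R M₂ := by
  intro p hp
  rcases aux_ass_subset_union (LinearMap.range (LinearMap.inl R M M₂)) hp with h | h
  · left
    have e : M ≃ₗ[R] ↥(LinearMap.range (LinearMap.inl R M M₂)) :=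
      LinearEquiv.ofInjective _ LinearMap.inl_injective
    exact (LinearEquiv.AssociatedPrimes.eq e) ▸ h
  · right
    have hsnd : Function.Surjective (LinearMap.snd R M M₂) := fun y => ⟨(0, y), rfl⟩
    have e : ((M × M₂) ⧸ LinearMap.range (LinearMap.inl R M M₂)) ≃ₗ[R] M₂ :=
      (Submodule.quotEquivOfEq _ _ (LinearMap.ker_snd (R := R) (M := M) (M₂ := M₂)).symm).trans
        (LinearMap.quotKerEquivOfSurjective _ hsnd)
    exact (LinearEquiv.AssociatedPrimes.eq e) ▸ h

/-- Associated primes of `M ⧸ (A ⊓ B)` are among those of `M ⧸ A` and `M ⧸ B`. -/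
theorem aux_ass_quot_inf [IsNoetherianRing R] {A B : Submodule R M} :
    associatedPrimes R (M ⧸ (A ⊓ B)) ⊆
      associatedPrimes R (M ⧸ A) ∪ associatedPrimes R (M ⧸ B) := by
  intro p hp
  set g : M →ₗ[R] (M ⧸ A) × (M ⧸ B) := A.mkQ.prod B.mkQ with hg
  have hker : LinearMap.ker g = A ⊓ B := by
    rw [hg, LinearMap.ker_prod, Submodule.ker_mkQ, Submodule.ker_mkQ]
  have e : (M ⧸ (A ⊓ B)) ≃ₗ[R] ↥(LinearMap.range g) :=
    (Submodule.quotEquivOfEq _ _ hker.symm).trans (LinearMap.quotKerEquivRange g)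
  have h1 : p ∈ associatedPrimes R ↥(LinearMap.range g) :=
    (LinearEquiv.AssociatedPrimes.eq e) ▸ hp
  exact aux_ass_prod (associatedPrimes.subset_of_injective (Submodule.injective_subtype _) h1)

/-- Associated primes of a quotient by a finite intersection. -/
theorem aux_ass_quot_iInf [IsNoetherianRing R] {ι : Type*} (s : Finset ι) (f : ι → Submodule R M) :
    associatedPrimes R (M ⧸ (⨅ i ∈ s, f i)) ⊆ ⋃ i ∈ s, associatedPrimes R (M ⧸ f i) := by
  classical
  induction s using Finset.induction_on with
  | empty =>
    intro p hp
    have htop : (⨅ i ∈ (∅ : Finset ι), f i) = ⊤ := by simp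
    haveI : Subsingleton (M ⧸ (⨅ i ∈ (∅ : Finset ι), f i)) :=
      Submodule.Quotient.subsingleton_iff.mpr htop
    rw [associatedPrimes.eq_empty_of_subsingleton] at hp
    exact absurd hp (Set.notMem_empty p)
  | insert a s ha IH =>
    intro p hp
    have hinf : (⨅ i ∈ insert a s, f i) = f a ⊓ ⨅ i ∈ s, f i := by
      rw [Finset.iInf_insert]
    have hp' : p ∈ associatedPrimes R (M ⧸ (f a ⊓ ⨅ i ∈ s, f i)) :=
      (LinearEquiv.AssociatedPrimes.eq (Submodule.quotEquivOfEq _ _ hinf)) ▸ hp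
    rcases aux_ass_quot_inf hp' with h | h
    · exact Set.mem_biUnion (Finset.mem_insert_self a s) h
    · obtain ⟨i, hi, hpi⟩ := Set.mem_iUnion₂.mp (IH h)
      exact Set.mem_biUnion (Finset.mem_insert_of_mem hi) hpi

/-- A minimal prime over the annihilator of a finitely generated module over a Noetherian
ring is an associated prime. -/
theorem aux_minimal_mem_ass [IsNoetherianRing R] [Module.Finite R M] {p : Ideal R}
    (hp : p ∈ (Module.annihilator R M).minimalPrimes) : p ∈ associatedPrimes R M := by
  classical
  obtain ⟨⟨hp1, hp2⟩, hpmin⟩ := hp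
  have hone : (1 : R) ∉ p := fun h => hp1.ne_top (Ideal.eq_top_of_isUnit_mem p h isUnit_one)
  set K : Submodule R M :=
    { carrier := {m | ∃ s, s ∉ p ∧ s • m = 0}
      add_mem' := by
        rintro a b ⟨s, hs, hsa⟩ ⟨t, ht, htb⟩
        refine ⟨s * t, fun h => (hp1.mem_or_mem h).elim hs ht, ?_⟩
        have h1 : (s * t) • a = 0 := by rw [mul_comm, mul_smul, hsa, smul_zero]
        have h2 : (s * t) • b = 0 := by rw [mul_smul, htb, smul_zero]
        rw [smul_add, h1, h2, add_zero]
      zero_mem' := ⟨1, hone, smul_zero 1⟩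
      smul_mem' := by
        rintro c m ⟨s, hs, hsm⟩
        exact ⟨s, hs, by rw [smul_comm, hsm, smul_zero]⟩ } with hK
  have hKne : K ≠ ⊤ := by
    intro hKtop
    obtain ⟨G, hG⟩ := Module.Finite.fg_top (R := R) (M := M)
    have hall : ∀ m : M, ∃ s, s ∉ p ∧ s • m = 0 := fun m => by
      have hm : m ∈ K := hKtop ▸ Submodule.mem_top
      exact hm
    choose t ht1 ht2 using hall
    have hs₀p : (∏ m ∈ G, t m) ∉ p := fun h => by
      obtain ⟨m, _, hmp⟩ := Ideal.IsPrime.prod_mem_iff.mp h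
      exact ht1 m hmp
    have hs₀ann : (∏ m ∈ G, t m) ∈ Module.annihilator R M := by
      rw [Module.mem_annihilator]
      intro m
      have hm : m ∈ Submodule.span R (G : Set M) := hG ▸ Submodule.mem_top
      induction hm using Submodule.span_induction with
      | mem x hx =>
        rw [← Finset.mul_prod_erase G t (Finset.mem_coe.mp hx), mul_comm, mul_smul, ht2, smul_zero]
      | zero => exact smul_zero _
      | add x y _ _ hx hy => rw [smul_add, hx, hy, add_zero]
      | smul c x _ hx => rw [smul_comm, hx, smul_zero]
    exact hs₀p (hp2 hs₀ann)
  haveI : Nontrivial (M ⧸ K) :=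
    Submodule.Quotient.nontrivial_iff.mpr hKne
  obtain ⟨q, hq0⟩ := associatedPrimes.nonempty R (M ⧸ K)
  obtain ⟨hq1, y, hy⟩ := aux_ass_iff.mp hq0
  have hqmem : ∀ s : R, s ∈ q ↔ s • y = 0 := fun s => by
    rw [hy, Submodule.mem_annihilator_span_singleton]
  have key : ∀ s, s ∉ p → ∀ z : M ⧸ K, s • z = 0 → z = 0 := by
    intro s hs z hz
    obtain ⟨m, rfl⟩ := Submodule.Quotient.mk_surjective K z
    have hsm : s • m ∈ K := by
      rwa [← Submodule.Quotient.mk_eq_zero, Submodule.Quotient.mk_smul]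
    obtain ⟨u, hu, hus⟩ := hsm
    rw [Submodule.Quotient.mk_eq_zero]
    exact ⟨u * s, fun h => (hp1.mem_or_mem h).elim hu hs, by rw [mul_smul]; exact hus⟩
  have hy0 : y ≠ 0 := by
    rintro rfl
    rw [Submodule.span_zero_singleton, Submodule.annihilator_bot] at hy
    exact hq1.ne_top hy
  have hqp : q ≤ p := fun s hs => by
    by_contra hsp
    exact hy0 (key s hsp y ((hqmem s).mp hs))
  have hannq : Module.annihilator R (M ⧸ K) ≤ q := fun s hs => by
    rw [hqmem]
    have := Module.mem_annihilator.mp hs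
    exact this y
  have hannMQ : Module.annihilator R M ≤ Module.annihilator R (M ⧸ K) :=
    LinearMap.annihilator_le_of_surjective K.mkQ (Submodule.mkQ_surjective K)
  have hpq : p = q := le_antisymm (hpmin ⟨hq1, hannMQ.trans hannq⟩ hqp) hqp
  obtain ⟨m, hm⟩ := Submodule.Quotient.mk_surjective K y
  obtain ⟨G, hG⟩ : p.FG := IsNoetherian.noetherian p
  have hGK : ∀ r : R, ∃ u, u ∉ p ∧ (r ∈ G → u • r • m = 0) := by
    intro r
    by_cases hr : r ∈ G
    · have hrp : r ∈ p := hG ▸ Ideal.subset_span hr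
      have hry : r • y = 0 := (hqmem r).mp (hpq ▸ hrp)
      have hrm : r • m ∈ K := by
        rw [← Submodule.Quotient.mk_eq_zero, Submodule.Quotient.mk_smul, hm]
        exact hry
      obtain ⟨u, hu, hur⟩ := hrm
      exact ⟨u, hu, fun _ => hur⟩
    · exact ⟨1, hone, fun h => absurd h hr⟩
  choose u hu1 hu2 using hGK
  have hTp : (∏ r ∈ G, u r) ∉ p := fun h => by
    obtain ⟨r, _, hrp⟩ := Ideal.IsPrime.prod_mem_iff.mp h
    exact hu1 r hrp
  refine aux_ass_iff.mpr ⟨hp1, (∏ r ∈ G, u r) • m, ?_⟩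
  ext s
  rw [Submodule.mem_annihilator_span_singleton]
  constructor
  · intro hs
    have hsub : p ≤ (Submodule.span R {(∏ r ∈ G, u r) • m}).annihilator := by
      rw [← hG, Ideal.span_le]
      intro r hr
      rw [SetLike.mem_coe, Submodule.mem_annihilator_span_singleton]
      have h0 : u r • r • m = 0 := hu2 r (Finset.mem_coe.mp hr)
      rw [smul_smul, ← Finset.mul_prod_erase G u (Finset.mem_coe.mp hr)]
      have hre : r * (u r * ∏ x ∈ G.erase r, u x) =
          (∏ x ∈ G.erase r, u x) * (u r * r) := by ring
      rw [hre, mul_smul, mul_smul, h0, smul_zero]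
    have := hsub hs
    rwa [Submodule.mem_annihilator_span_singleton] at this
  · intro hs0
    have h1 : (s * ∏ r ∈ G, u r) • m = 0 := by rwa [mul_smul]
    have h2 : (s * ∏ r ∈ G, u r) • y = 0 := by
      rw [← hm, ← Submodule.Quotient.mk_smul, h1, Submodule.Quotient.mk_zero]
    have hsT : s * ∏ r ∈ G, u r ∈ q := (hqmem _).mpr h2
    rw [hpq]
    exact (hq1.mem_or_mem hsT).resolve_right (fun h => hTp (by rwa [hpq]))

/-- The set of associated primes of a finitely generated module over a Noetherian ring
is finite. -/
theorem aux_ass_finite (R : Type*) [CommRing R] [IsNoetherianRing R] (M : Type*)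
    [AddCommGroup M] [Module R M] [Module.Finite R M] : (associatedPrimes R M).Finite := by
  classical
  haveI : IsNoetherian R M := isNoetherian_of_isNoetherianRing_of_finite R M
  have key : ∀ N : Submodule R M, (associatedPrimes R (M ⧸ N)).Finite := by
    intro N
    induction N using IsNoetherian.induction with
    | hgt N IH =>
      by_cases hQ : Subsingleton (M ⧸ N)
      · rw [associatedPrimes.eq_empty_of_subsingleton]
        exact Set.finite_empty
      · haveI : Nontrivial (M ⧸ N) := not_subsingleton_iff_nontrivial.mp hQ
        obtain ⟨p, hp0⟩ := associatedPrimes.nonempty R (M ⧸ N)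
        obtain ⟨hp1, xb, hxb⟩ := aux_ass_iff.mp hp0
        have hmemp : ∀ r : R, r ∈ p ↔ r • xb = 0 := fun r => by
          rw [hxb, Submodule.mem_annihilator_span_singleton]
        have hxb0 : xb ≠ 0 := by
          rintro rfl
          rw [Submodule.span_zero_singleton, Submodule.annihilator_bot] at hxb
          exact hp1.ne_top hxb
        obtain ⟨x, hx⟩ := Submodule.Quotient.mk_surjective N xb
        have hxN : x ∉ N := fun h => hxb0 (hx ▸ (Submodule.Quotient.mk_eq_zero N).mpr h)
        have hNN' : N < N ⊔ R ∙ x :=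
          lt_of_le_of_ne le_sup_left (fun h => hxN (by
            rw [h]; exact Submodule.mem_sup_right (Submodule.mem_span_singleton_self x)))
        have hmap : (N ⊔ R ∙ x).map N.mkQ = (R ∙ xb) := by
          have h1 : N.map N.mkQ = ⊥ := by
            rw [eq_bot_iff]
            rintro y hy
            obtain ⟨z, hz, rfl⟩ := hy
            exact (Submodule.mem_bot R).mpr ((Submodule.Quotient.mk_eq_zero N).mpr hz)
          have h2 : (R ∙ x).map N.mkQ = R ∙ xb := by
            rw [Submodule.map_span, Set.image_singleton]
            rw [Submodule.mkQ_apply, hx]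
          rw [Submodule.map_sup, h1, h2, bot_sup_eq]
        have hassS : associatedPrimes R ↥(R ∙ xb) ⊆ {p} := by
          rintro q hq0
          obtain ⟨hq1, y, hy⟩ := aux_ass_iff.mp hq0
          have hy0 : y ≠ 0 := by
            rintro rfl
            rw [Submodule.span_zero_singleton, Submodule.annihilator_bot] at hy
            exact hq1.ne_top hy
          obtain ⟨c, hc⟩ := Submodule.mem_span_singleton.mp y.2
          have hcp : c ∉ p := by
            intro hcp
            exact hy0 (Subtype.ext (by rw [← hc, (hmemp c).mp hcp]; simp))
          have hqp : q = p := by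
            ext s
            rw [hy, Submodule.mem_annihilator_span_singleton]
            have hcoe : (s • y = 0) ↔ s • (y : M ⧸ N) = 0 := by
              rw [Subtype.ext_iff]; rfl
            rw [hcoe, ← hc, smul_smul]
            constructor
            · intro hsc
              exact (hp1.mem_or_mem ((hmemp (s * c)).mpr hsc)).resolve_right hcp
            · intro hs
              exact (hmemp (s * c)).mp (Ideal.mul_mem_right c p hs)
          exact hqp ▸ rfl
        have e : ((M ⧸ N) ⧸ (R ∙ xb)) ≃ₗ[R] M ⧸ (N ⊔ R ∙ x) := by
          have e0 := Submodule.quotientQuotientEquivQuotient N (N ⊔ R ∙ x) le_sup_left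
          rw [hmap] at e0
          exact e0
        have hfin2 : (associatedPrimes R ((M ⧸ N) ⧸ (R ∙ xb))).Finite := by
          rw [LinearEquiv.AssociatedPrimes.eq e]
          exact IH _ hNN'
        refine (((Set.finite_singleton p).union hfin2).subset ?_)
        exact (aux_ass_subset_union (R ∙ xb)).trans
          (Set.union_subset_union hassS (subset_refl _))
  have e0 : (M ⧸ (⊥ : Submodule R M)) ≃ₗ[R] M := Submodule.quotEquivOfEqBot ⊥ rfl
  rw [← LinearEquiv.AssociatedPrimes.eq e0]
  exact key ⊥

/-- Bounding Krull dimension of a quotient via minimal primes. -/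
theorem aux_dim_le {R : Type*} [CommRing R] (I : Ideal R) (c : WithBot ℕ∞)
    (h : ∀ p ∈ I.minimalPrimes, ringKrullDim (R ⧸ p) ≤ c) : ringKrullDim (R ⧸ I) ≤ c := by
  rw [ringKrullDim, Order.krullDim]
  apply iSup_le
  intro l
  set F : PrimeSpectrum (R ⧸ I) → PrimeSpectrum R :=
    fun q => ⟨q.asIdeal.comap (Ideal.Quotient.mk I), by
      haveI := q.2; exact Ideal.IsPrime.comap _⟩ with hF
  have hFmono : StrictMono F := by
    intro a b hab
    rw [← PrimeSpectrum.asIdeal_lt_asIdeal] at hab ⊢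
    refine lt_of_le_of_ne (Ideal.comap_mono hab.le) (fun hEq => hab.ne ?_)
    exact Ideal.comap_injective_of_surjective _ Ideal.Quotient.mk_surjective hEq
  set l' := l.map F hFmono with hl'
  have hmem : ∀ k, I ≤ (l' k).asIdeal := by
    intro k r hr
    show Ideal.Quotient.mk I r ∈ (l k).asIdeal
    rw [Ideal.Quotient.eq_zero_iff_mem.mpr hr]
    exact Submodule.zero_mem _
  haveI : ((l' 0).asIdeal).IsPrime := (l' 0).2
  obtain ⟨p, hpmin, hple⟩ := Ideal.exists_minimalPrimes_le (hmem 0)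
  refine le_trans ?_ (h p hpmin)
  haveI hpI : p.IsPrime := hpmin.1.1
  have hplek : ∀ k, p ≤ (l' k).asIdeal := fun k =>
    hple.trans ((PrimeSpectrum.asIdeal_le_asIdeal _ _).mpr (l'.monotone (Fin.zero_le k)))
  have hker : RingHom.ker (Ideal.Quotient.mk p) = p := Ideal.mk_ker
  let l2 : LTSeries (PrimeSpectrum (R ⧸ p)) :=
    { length := l.length
      toFun := fun k => ⟨((l' k).asIdeal).map (Ideal.Quotient.mk p), by
        haveI : ((l' k).asIdeal).IsPrime := (l' k).2
        exact Ideal.map_isPrime_of_surjective Ideal.Quotient.mk_surjective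
          (by rw [hker]; exact hplek k)⟩
      step := fun k => by
        have hlt : l' k.castSucc < l' k.succ := l'.step k
        show (_ : PrimeSpectrum (R ⧸ p)) < _
        rw [← PrimeSpectrum.asIdeal_lt_asIdeal] at hlt ⊢
        refine lt_of_le_of_ne (Ideal.map_mono hlt.le) (fun hEq => hlt.ne ?_)
        have h1 := congrArg (Ideal.comap (Ideal.Quotient.mk p)) hEq
        rw [Ideal.comap_map_of_surjective _ Ideal.Quotient.mk_surjective,
          Ideal.comap_map_of_surjective _ Ideal.Quotient.mk_surjective,
          ← RingHom.ker_eq_comap_bot, hker,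
          sup_eq_left.mpr (hplek k.castSucc), sup_eq_left.mpr (hplek k.succ)] at h1
        exact h1 }
  exact Order.LTSeries.length_le_krullDim l2

/-- Monotonicity of Krull dimension of quotients. -/
theorem aux_rkd_mono {R : Type*} [CommRing R] {I J : Ideal R} (h : I ≤ J) :
    ringKrullDim (R ⧸ J) ≤ ringKrullDim (R ⧸ I) :=
  ringKrullDim_le_of_surjective (Ideal.Quotient.factor h) (fun x => by
    obtain ⟨r, rfl⟩ := Ideal.Quotient.mk_surjective x
    exact ⟨Ideal.Quotient.mk I r, rfl⟩)

end AuxLemmas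

/-- if `0 = ⋂_{p ∈ Ass M} M(p)` is a primary decomposition of `0` in `M`,
then for `i < ℓ` the term `D_i` of the dimension filtration equals
`⋂ {M(p) : p ∈ Ass_R M, dim R/p > d_i}`. -/
theorem stmt15 (R : Type*) [CommRing R] [IsNoetherianRing R]
    (M : Type*) [AddCommGroup M] [Module R M] [Module.Finite R M] [Nontrivial M]
    (Mp : Ideal R → Submodule R M)
    (hprimary : ∀ p ∈ associatedPrimes R M, IsPrimarySubmodule (Mp p) p)
    (hdecomp : ⨅ p ∈ associatedPrimes R M, Mp p = ⊥)
    (ℓ : ℕ) (D : Fin (ℓ + 1) → Submodule R M) (hD : IsDimFiltration R M ℓ D) :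
    ∀ i : Fin ℓ, D i.castSucc =
      ⨅ p ∈ {p ∈ associatedPrimes R M |
        moduleDim R ↥(D i.castSucc) < ringKrullDim (R ⧸ p)}, Mp p := by
  classical
  intro i
  haveI : IsNoetherian R M := isNoetherian_of_isNoetherianRing_of_finite R M
  have hfin : (associatedPrimes R M).Finite := aux_ass_finite R M
  set d := moduleDim R ↥(D i.castSucc) with hd
  have hle : D i.castSucc ≤
      ⨅ p ∈ {p ∈ associatedPrimes R M | d < ringKrullDim (R ⧸ p)}, Mp p := by
    refine le_iInf₂ fun p hp => ?_
    obtain ⟨hpAss, hpd⟩ := hp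
    by_contra hnle
    obtain ⟨x, hxD, hxMp⟩ := SetLike.not_le_iff_exists.mp hnle
    set φ : ↥(D i.castSucc) →ₗ[R] M ⧸ Mp p := (Mp p).mkQ.comp (D i.castSucc).subtype with hφ
    have hrange : LinearMap.range φ ≠ ⊥ := by
      intro hbot
      have hz : φ ⟨x, hxD⟩ = 0 := by
        rw [← Submodule.mem_bot (R := R), ← hbot]
        exact LinearMap.mem_range_self φ _
      exact hxMp ((Submodule.Quotient.mk_eq_zero _).mp hz)
    haveI : Nontrivial ↥(LinearMap.range φ) := Submodule.nontrivial_iff_ne_bot.mpr hrange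
    obtain ⟨q, hq⟩ := associatedPrimes.nonempty R ↥(LinearMap.range φ)
    have hq' : q ∈ associatedPrimes R (M ⧸ Mp p) :=
      associatedPrimes.subset_of_injective (Submodule.injective_subtype _) hq
    rw [hprimary p hpAss, Set.mem_singleton_iff] at hq'
    subst hq'
    have h1 : Module.annihilator R ↥(LinearMap.range φ) ≤ q := by
      rw [← Submodule.annihilator_top]; exact hq.annihilator_le
    have h2 : Module.annihilator R ↥(D i.castSucc) ≤
        Module.annihilator R ↥(LinearMap.range φ) :=
      LinearMap.annihilator_le_of_surjective φ.rangeRestrict (LinearMap.surjective_rangeRestrict φ)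
    have hcon : ringKrullDim (R ⧸ q) ≤ d := (aux_rkd_mono h1).trans (aux_rkd_mono h2)
    exact absurd hpd (not_lt.mpr hcon)
  have hge : (⨅ p ∈ {p ∈ associatedPrimes R M | d < ringKrullDim (R ⧸ p)}, Mp p) ≤
      D i.castSucc := by
    by_cases h0 : i.castSucc = 0
    · have hdbot : d = ⊥ := by
        rw [hd, h0, hD.1, moduleDim]
        have hann : Module.annihilator R ↥(⊥ : Submodule R M) = ⊤ := Submodule.annihilator_bot
        rw [hann]
        haveI : Subsingleton (R ⧸ (⊤ : Ideal R)) :=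
          Submodule.Quotient.subsingleton_iff.mpr rfl
        exact ringKrullDim_eq_bot_of_subsingleton
      have hset : {p ∈ associatedPrimes R M | d < ringKrullDim (R ⧸ p)} =
          associatedPrimes R M := by
        refine Set.sep_eq_self_iff_mem_true.mpr fun p hp => ?_
        haveI : Nontrivial (R ⧸ p) := Ideal.Quotient.nontrivial_iff.mpr hp.isPrime.ne_top
        have hnn : (0 : WithBot ℕ∞) ≤ ringKrullDim (R ⧸ p) := ringKrullDim_nonneg_of_nontrivial
        rw [hdbot]
        refine bot_lt_iff_ne_bot.mpr fun hb => ?_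
        rw [hb, le_bot_iff] at hnn
        exact (by simp : ((0 : WithBot ℕ∞) ≠ ⊥)) hnn
      rw [hset, hdecomp, h0, hD.1]
    · obtain ⟨j, hj⟩ : ∃ j : Fin ℓ, j.succ = i.castSucc := by
        have hi0 : (i : ℕ) ≠ 0 := by
          intro h
          exact h0 (Fin.ext (by simpa using h))
        refine ⟨⟨(i : ℕ) - 1, by omega⟩, Fin.ext ?_⟩
        simp only [Fin.val_succ, Fin.coe_castSucc]
        omega
      set N := ⨅ p ∈ {p ∈ associatedPrimes R M | d < ringKrullDim (R ⧸ p)}, Mp p with hN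
      set S := {p ∈ associatedPrimes R M | ¬ d < ringKrullDim (R ⧸ p)} with hS
      have hSfin : S.Finite := hfin.subset (Set.sep_subset _ _)
      set T := hSfin.toFinset with hT
      set K0 := ⨅ p ∈ T, Mp p with hK0
      have hbot : N ⊓ K0 = ⊥ := by
        rw [eq_bot_iff, ← hdecomp]
        refine le_iInf₂ fun p hp => ?_
        by_cases hc : d < ringKrullDim (R ⧸ p)
        · exact inf_le_left.trans (iInf₂_le_of_le p ⟨hp, hc⟩ le_rfl)
        · exact inf_le_right.trans (iInf₂_le_of_le p (hSfin.mem_toFinset.mpr ⟨hp, hc⟩) le_rfl)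
      set f : ↥N →ₗ[R] M ⧸ K0 := K0.mkQ.comp N.subtype with hf
      have hfinj : Function.Injective f := by
        rw [← LinearMap.ker_eq_bot, eq_bot_iff]
        rintro ⟨x, hxN⟩ hx
        rw [LinearMap.mem_ker] at hx
        have hxK : x ∈ K0 := (Submodule.Quotient.mk_eq_zero _).mp hx
        have hxbot : x ∈ N ⊓ K0 := ⟨hxN, hxK⟩
        rw [hbot] at hxbot
        exact (Submodule.mem_bot R).mpr (Subtype.ext (by simpa using hxbot))
      haveI : Module.Finite R ↥N := Module.Finite.iff_fg.mpr (IsNoetherian.noetherian N)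
      have hAssN : associatedPrimes R ↥N ⊆ S := by
        intro q hq
        have h1 : q ∈ associatedPrimes R (M ⧸ K0) :=
          associatedPrimes.subset_of_injective hfinj hq
        have h2 := aux_ass_quot_iInf T Mp h1
        obtain ⟨p, hpT, hqp⟩ := Set.mem_iUnion₂.mp h2
        have hpS : p ∈ S := hSfin.mem_toFinset.mp hpT
        rw [hprimary p hpS.1, Set.mem_singleton_iff] at hqp
        exact hqp ▸ hpS
      have hdim : moduleDim R ↥N ≤ d := by
        rw [moduleDim]
        refine aux_dim_le _ _ fun q hqmin => ?_
        have hqS : q ∈ S := hAssN (aux_minimal_mem_ass hqmin)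
        exact not_lt.mp hqS.2
      have hG := hD.2.2.2.1 j
      rw [hj] at hG
      exact hG.2 hdim
  exact le_antisymm hle hge
end

section
/- Let R be a Noetherian local ring, A a module-finite local R-algebra, M a finitely generated A-module, and N = A·M_n the A-submodule of M generated by the largest R-submodule M_n of dimension ≤ n. Then dim_R N ≤ n, i.e., every associated prime p of N over R satisfies dim R/p ≤ n. -/
open IsLocalRing

lemma dimLe_of_le {d d' : WithBot ℕ∞} {n : ℤ} (h : d ≤ d') (h' : dimLe d' n) :
    dimLe d n := by
  unfold dimLe at *
  split_ifs at h' ⊢ with hn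
  · exact h.trans h'
  · rw [h'] at h; exact le_bot_iff.mp h

lemma moduleDim_le_of_surjective {R : Type*} [CommRing R] {X Y : Type*} [AddCommGroup X]
    [Module R X] [AddCommGroup Y] [Module R Y] (f : X →ₗ[R] Y) (hf : Function.Surjective f) :
    moduleDim R Y ≤ moduleDim R X := by
  have hann : Module.annihilator R X ≤ Module.annihilator R Y := by
    intro r hr
    rw [Module.mem_annihilator] at hr ⊢
    intro y
    obtain ⟨x, rfl⟩ := hf y
    rw [← map_smul, hr x, map_zero]
  refine ringKrullDim_le_of_surjective (Ideal.Quotient.factor hann) ?_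
  intro y
  obtain ⟨r, rfl⟩ := Ideal.Quotient.mk_surjective y
  exact ⟨Ideal.Quotient.mk _ r, rfl⟩

/-- If `Mₙ` is the largest `R`-submodule of `M` with `dim_R Mₙ ≤ n`, then the
`A`-submodule `N = A · Mₙ` of `M` generated by `Mₙ` also satisfies `dim_R N ≤ n`. -/
theorem stmt19 (R : Type*) [CommRing R] [IsNoetherianRing R] [IsLocalRing R]
    (A : Type*) [CommRing A] [IsNoetherianRing A] [IsLocalRing A]
    [Algebra R A] [Module.Finite R A]
    (M : Type*) [AddCommGroup M] [Module A M] [Module.Finite A M]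
    [Module R M] [IsScalarTower R A M] (n : ℤ)
    (Mn : Submodule R M)
    (hMn : IsGreatest {N : Submodule R M | dimLe (moduleDim R ↥N) n} Mn) :
    dimLe (moduleDim R ↥((Submodule.span A (Mn : Set M)).restrictScalars R)) n := by
  have key : ∀ (a : A) (x : M), x ∈ Mn → a • x ∈ Mn := by
    intro a x hx
    let f : Mn →ₗ[R] M :=
      { toFun := fun y => a • (y : M)
        map_add' := fun y z => by simp [smul_add]
        map_smul' := fun r y => by simp [smul_comm r a] }
    have hP : dimLe (moduleDim R ↥(LinearMap.range f)) n := by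
      refine dimLe_of_le (moduleDim_le_of_surjective f.rangeRestrict
        (LinearMap.surjective_rangeRestrict f)) hMn.1
    have hle : LinearMap.range f ≤ Mn := hMn.2 hP
    exact hle ⟨⟨x, hx⟩, rfl⟩
  let Mn' : Submodule A M :=
    { carrier := Mn
      add_mem' := fun h1 h2 => Mn.add_mem h1 h2
      zero_mem' := Mn.zero_mem
      smul_mem' := fun a x hx => key a x hx }
  have heq : (Submodule.span A (Mn : Set M)).restrictScalars R = Mn := by
    apply le_antisymm
    · intro x hx
      have : x ∈ Submodule.span A (Mn : Set M) := hx
      have h2 : Submodule.span A (Mn : Set M) ≤ Mn' := Submodule.span_le.mpr (fun y hy => hy)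
      exact h2 this
    · intro x hx
      exact Submodule.subset_span hx
  rw [heq]
  exact hMn.1
end
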